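/- Let P be a locally finite, bounded partially ordered set, F a field of characteristic zero, G a group, and θ : P → G a function with G_θ finite; let A^θ denote I(P,F) with the elementary G-grading determined by θ. Then a polynomial Φ in the free G-graded algebra F⟨X⟩ is a G-graded polynomial identity of A^θ if and only if, for every maximal chain C ⊆ P, Φ is a G-graded polynomial identity of the subalgebra I(C,F) with the elementary grading determined by the restriction θ|_C. Equivalently, T_G(A^θ) = ⋂_C T_G(A_C^{θ|_C}), the intersection taken over all maximal chains C of P. -/

import Mathlib

set_option linter.unusedSectionVars false


/-- `A^θ(g)`: the `F`-subspace of the incidence algebra `I(P,F)` consisting of the functions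
`f` with `f x y = 0` whenever `x ≤ y` and `(θ x)⁻¹ * θ y ≠ g`. -/
def elemSubspace (F : Type*) [Field F] {α : Type*} [PartialOrder α] [LocallyFiniteOrder α]
    {G : Type*} [Group G] (θ : α → G) (g : G) :
    Submodule F (IncidenceAlgebra F α) where
  carrier := {f | ∀ x y : α, x ≤ y → (θ x)⁻¹ * θ y ≠ g → f x y = 0}
  zero_mem' := by intro x y _ _; rfl
  add_mem' := by
    intro f₁ f₂ h₁ h₂ x y hxy hg
    show (f₁ + f₂) x y = 0
    rw [IncidenceAlgebra.add_apply, h₁ x y hxy hg, h₂ x y hxy hg, add_zero]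
  smul_mem' := by
    intro c f hf x y hxy hg
    show (c • f) x y = 0
    rw [IncidenceAlgebra.constSMul_apply, hf x y hxy hg, smul_zero]


/-- `Φ`, an element of the free algebra over `F` on the variables `x_i^g` (`i ∈ ℕ`, `g ∈ G`),
is a `G`-graded polynomial identity of the algebra `A` graded by the family of subspaces
`Asub : G → Submodule F A` if `Φ` vanishes under every substitution sending each variable
`x_i^g` to an element of `Asub g`. -/
def IsGradedPI {F A G : Type*} [Field F] [Ring A] [Algebra F A]
    (Asub : G → Submodule F A) (Phi : FreeAlgebra F (ℕ × G)) : Prop :=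
  ∀ v : ℕ × G → A, (∀ p : ℕ × G, v p ∈ Asub p.2) → FreeAlgebra.lift F v Phi = 0

/-- The subspace `I(Q,F)` of the incidence algebra `I(P,F)` consisting of the functions
vanishing off `Q × Q`; for `Q` a chain it is a (sub)incidence algebra of a chain. -/
def chainSubspace (F : Type*) [Field F] {α : Type*} [PartialOrder α] [LocallyFiniteOrder α]
    (Q : Set α) : Submodule F (IncidenceAlgebra F α) where
  carrier := {f | ∀ x y : α, ¬(x ∈ Q ∧ y ∈ Q) → f x y = 0}
  zero_mem' := by intro x y _; rfl
  add_mem' := by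
    intro f₁ f₂ h₁ h₂ x y hxy
    show (f₁ + f₂) x y = 0
    rw [IncidenceAlgebra.add_apply, h₁ x y hxy, h₂ x y hxy, add_zero]
  smul_mem' := by
    intro c f hf x y hxy
    show (c • f) x y = 0
    rw [IncidenceAlgebra.constSMul_apply, hf x y hxy, smul_zero]



section Aux

open Finset

variable {F α : Type*} [Field F] [PartialOrder α] [LocallyFiniteOrder α] [DecidableEq α]

/-- Restriction of an incidence function to `Q × Q`. -/
noncomputable def IARestrict (Q : Set α) (f : IncidenceAlgebra F α) : IncidenceAlgebra F α :=
  open Classical in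
  ⟨fun z w => if z ∈ Q ∧ w ∈ Q then f z w else 0, fun a b hab => by
    split_ifs with h
    · exact IncidenceAlgebra.apply_eq_zero_of_not_le hab f
    · rfl⟩

/-- Restricted valuation. -/
noncomputable def vres {ι : Type*} (Q : Set α) (v : ι → IncidenceAlgebra F α) :
    ι → IncidenceAlgebra F α := fun p => IARestrict Q (v p)

open Classical in
lemma vres_apply {ι : Type*} (Q : Set α) (v : ι → IncidenceAlgebra F α) (p : ι) (z w : α) :
    vres Q v p z w = if z ∈ Q ∧ w ∈ Q then v p z w else 0 := rfl

lemma vres_apply_of_mem {ι : Type*} {Q : Set α} (v : ι → IncidenceAlgebra F α) (p : ι)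
    {z w : α} (hz : z ∈ Q) (hw : w ∈ Q) : vres Q v p z w = v p z w := by
  rw [vres_apply, if_pos ⟨hz, hw⟩]

lemma vres_insert_apply {ι : Type*} {c z w : α} (hz : z ≠ c) (hw : w ≠ c) (Q : Set α)
    (v : ι → IncidenceAlgebra F α) (p : ι) :
    vres (insert c Q) v p z w = vres Q v p z w := by
  rw [vres_apply, vres_apply]
  have h : (z ∈ insert c Q ∧ w ∈ insert c Q) ↔ (z ∈ Q ∧ w ∈ Q) := by
    simp [Set.mem_insert_iff, hz, hw]
  by_cases hq : z ∈ Q ∧ w ∈ Q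
  · rw [if_pos (h.mpr hq), if_pos hq]
  · rw [if_neg fun hh => hq (h.mp hh), if_neg hq]

lemma lprod_insert {ι : Type*} (v : ι → IncidenceAlgebra F α) (c : α) (Q : Set α)
    (l : List ι) : ∀ z w : α, ¬(z ≤ c ∧ c ≤ w) →
    (l.map (vres (insert c Q) v)).prod z w = (l.map (vres Q v)).prod z w := by
  induction l with
  | nil => intro z w _; simp
  | cons p l ih =>
    intro z w hzw
    simp only [List.map_cons, List.prod_cons, IncidenceAlgebra.mul_apply]
    refine Finset.sum_congr rfl fun u hu => ?_
    rw [Finset.mem_Icc] at hu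
    have hz : z ≠ c := by rintro rfl; exact hzw ⟨le_rfl, hu.1.trans hu.2⟩
    have hu' : u ≠ c := by rintro rfl; exact hzw ⟨hu.1, hu.2⟩
    rw [vres_insert_apply hz hu', ih u w fun h => hzw ⟨hu.1.trans h.1, h.2⟩]

lemma lprod_four {ι : Type*} (v : ι → IncidenceAlgebra F α) {a b : α}
    (hab : ¬a ≤ b) (hba : ¬b ≤ a) (Q : Set α) (l : List ι) : ∀ z w : α,
    (l.map (vres (insert a (insert b Q)) v)).prod z w + (l.map (vres Q v)).prod z w =
    (l.map (vres (insert a Q) v)).prod z w + (l.map (vres (insert b Q) v)).prod z w := by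
  induction l with
  | nil => intro z w; simp
  | cons p l ih =>
    intro z w
    simp only [List.map_cons, List.prod_cons, IncidenceAlgebra.mul_apply,
      ← Finset.sum_add_distrib]
    refine Finset.sum_congr rfl fun u hu => ?_
    rw [Finset.mem_Icc] at hu
    by_cases ha : z = a ∨ u = a
    · have hz : z ≠ b := by
        rintro rfl
        rcases ha with h | h
        · exact hab (le_of_eq h.symm)
        · exact hba (hu.1.trans (le_of_eq h))
      have hu' : u ≠ b := by
        rintro rfl
        rcases ha with h | h
        · exact hab ((le_of_eq h.symm).trans hu.1)
        · exact hba (le_of_eq h)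
      have hub : ¬(u ≤ b ∧ b ≤ w) := by
        rintro ⟨h1, _⟩
        rcases ha with h | h
        · exact hab ((le_of_eq h.symm).trans (hu.1.trans h1))
        · exact hab ((le_of_eq h.symm).trans h1)
      rw [Set.insert_comm a b Q, vres_insert_apply hz hu' (insert a Q) v p,
        vres_insert_apply hz hu' Q v p, lprod_insert v b (insert a Q) l u w hub,
        lprod_insert v b Q l u w hub]
    · by_cases hb : z = b ∨ u = b
      · have hz : z ≠ a := fun h => ha (Or.inl h)
        have hu' : u ≠ a := fun h => ha (Or.inr h)
        have hua : ¬(u ≤ a ∧ a ≤ w) := by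
          rintro ⟨h1, _⟩
          rcases hb with h | h
          · exact hba ((le_of_eq h.symm).trans (hu.1.trans h1))
          · exact hba ((le_of_eq h.symm).trans h1)
        rw [vres_insert_apply hz hu' (insert b Q) v p, vres_insert_apply hz hu' Q v p,
          lprod_insert v a (insert b Q) l u w hua, lprod_insert v a Q l u w hua]
        exact add_comm _ _
      · push_neg at ha hb
        rw [vres_insert_apply ha.1 ha.2 (insert b Q) v p,
          vres_insert_apply ha.1 ha.2 Q v p, vres_insert_apply hb.1 hb.2 Q v p,
          ← mul_add, ← mul_add, ih u w]

lemma lprod_Icc {ι : Type*} (v : ι → IncidenceAlgebra F α) (x y : α) (l : List ι) :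
    ∀ z w : α, x ≤ z → w ≤ y →
    (l.map (vres (Set.Icc x y) v)).prod z w = (l.map v).prod z w := by
  induction l with
  | nil => intro z w _ _; simp
  | cons p l ih =>
    intro z w hxz hwy
    simp only [List.map_cons, List.prod_cons, IncidenceAlgebra.mul_apply]
    refine Finset.sum_congr rfl fun u hu => ?_
    rw [Finset.mem_Icc] at hu
    rw [vres_apply_of_mem v p (Set.mem_Icc.mpr ⟨hxz, hu.1.trans (hu.2.trans hwy)⟩)
      (Set.mem_Icc.mpr ⟨hxz.trans hu.1, hu.2.trans hwy⟩), ih u w (hxz.trans hu.1) hwy]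

lemma exists_list_preimage {A X : Type*} (g : X → A) :
    ∀ l : List A, (∀ y ∈ l, y ∈ Set.range g) → ∃ l' : List X, l'.map g = l := by
  intro l
  induction l with
  | nil => exact fun _ => ⟨[], rfl⟩
  | cons y l ih =>
    intro h
    obtain ⟨x, hx⟩ := h y List.mem_cons_self
    obtain ⟨l', hl'⟩ := ih fun z hz => h z (List.mem_cons_of_mem _ hz)
    exact ⟨x :: l', by simp [hx, hl']⟩

lemma freeAlgebra_induction_linear {X : Type*} (P : FreeAlgebra F X → Prop)
    (h0 : P 0) (hadd : ∀ u w, P u → P w → P (u + w))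
    (hsmul : ∀ (c : F) u, P u → P (c • u))
    (hmon : ∀ l : List X, P ((l.map (FreeAlgebra.ι F)).prod)) (Phi : FreeAlgebra F X) :
    P Phi := by
  have hPhi : Phi ∈ Submodule.span F
      ((Submonoid.closure (Set.range (FreeAlgebra.ι F)) : Submonoid (FreeAlgebra F X)) :
        Set (FreeAlgebra F X)) := by
    rw [← Algebra.adjoin_eq_span, Subalgebra.mem_toSubmodule, FreeAlgebra.adjoin_range_ι]
    exact Algebra.mem_top
  refine Submodule.span_induction ?_ h0 (fun x y _ _ hx hy => hadd x y hx hy)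
    (fun c x _ hx => hsmul c x hx) hPhi
  intro u hu
  obtain ⟨l, hl, rfl⟩ := Submonoid.exists_list_of_mem_closure hu
  obtain ⟨l', rfl⟩ := exists_list_preimage (FreeAlgebra.ι F) l hl
  exact hmon l'

lemma lift_list_prod {ι : Type*} (v' : ι → IncidenceAlgebra F α) (l : List ι) :
    FreeAlgebra.lift F v' ((l.map (FreeAlgebra.ι F)).prod) = (l.map v').prod := by
  rw [map_list_prod, List.map_map]
  congr 1
  ext p
  simp [FreeAlgebra.lift_ι_apply]

lemma lift_four {ι : Type*} (v : ι → IncidenceAlgebra F α) {a b : α}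
    (hab : ¬a ≤ b) (hba : ¬b ≤ a) (Q : Set α) (Phi : FreeAlgebra F ι) (z w : α) :
    FreeAlgebra.lift F (vres (insert a (insert b Q)) v) Phi z w
      + FreeAlgebra.lift F (vres Q v) Phi z w
    = FreeAlgebra.lift F (vres (insert a Q) v) Phi z w
      + FreeAlgebra.lift F (vres (insert b Q) v) Phi z w := by
  induction Phi using freeAlgebra_induction_linear with
  | h0 => simp
  | hadd u u' hu hu' =>
    simp only [map_add, IncidenceAlgebra.add_apply]
    rw [add_add_add_comm, hu, hu', add_add_add_comm]
  | hsmul c u hu =>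
    simp only [map_smul, IncidenceAlgebra.constSMul_apply, smul_eq_mul, ← mul_add, hu]
  | hmon l =>
    simp only [lift_list_prod]
    exact lprod_four v hab hba Q l z w

lemma lift_Icc {ι : Type*} (v : ι → IncidenceAlgebra F α) (x y : α) (Phi : FreeAlgebra F ι)
    (z w : α) (hxz : x ≤ z) (hwy : w ≤ y) :
    FreeAlgebra.lift F (vres (Set.Icc x y) v) Phi z w = FreeAlgebra.lift F v Phi z w := by
  induction Phi using freeAlgebra_induction_linear with
  | h0 => simp
  | hadd u u' hu hu' => simp only [map_add, IncidenceAlgebra.add_apply, hu, hu']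
  | hsmul c u hu => simp only [map_smul, IncidenceAlgebra.constSMul_apply, hu]
  | hmon l =>
    simp only [lift_list_prod]
    exact lprod_Icc v x y l z w hxz hwy

end Aux


section Main

variable {F α G : Type*} [Field F] [PartialOrder α] [LocallyFiniteOrder α] [DecidableEq α]
  [Group G]

lemma mem_elemSubspace {θ : α → G} {g : G} {f : IncidenceAlgebra F α} :
    f ∈ elemSubspace F θ g ↔
      ∀ x y : α, x ≤ y → (θ x)⁻¹ * θ y ≠ g → f x y = 0 := Iff.rfl

lemma mem_chainSubspace {Q : Set α} {f : IncidenceAlgebra F α} :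
    f ∈ chainSubspace F Q ↔ ∀ x y : α, ¬(x ∈ Q ∧ y ∈ Q) → f x y = 0 := Iff.rfl

theorem gradedPI_iff_forall_maxChain' (θ : α → G) (Phi : FreeAlgebra F (ℕ × G)) :
    IsGradedPI (elemSubspace F θ) Phi ↔
      ∀ C : Set α, IsMaxChain (· ≤ ·) C →
        IsGradedPI (fun g : G => elemSubspace F θ g ⊓ chainSubspace F C) Phi := by
  constructor
  · intro hPI C _ v hv
    exact hPI v fun p => (Submodule.mem_inf.mp (hv p)).1
  · intro h v hv
    -- membership facts for restricted valuations
    have hvres : ∀ (Q : Set α) (p : ℕ × G), vres Q v p ∈ elemSubspace F θ p.2 := by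
      intro Q p
      rw [mem_elemSubspace]
      intro x y hxy hg
      rw [vres_apply]
      split_ifs with hq
      · exact mem_elemSubspace.mp (hv p) x y hxy hg
      · rfl
    have key : ∀ (n : ℕ) (D : Finset α), D.card ≤ n →
        FreeAlgebra.lift F (vres (↑D) v) Phi = 0 := by
      intro n
      induction n with
      | zero =>
        intro D hD
        have hDe : D = ∅ := Finset.card_eq_zero.mp (Nat.le_antisymm hD (Nat.zero_le _))
        subst hDe
        have hch : IsChain (· ≤ ·) ((↑(∅ : Finset α)) : Set α) := by
          intro x hx
          simp at hx
        obtain ⟨C, hC, hsub⟩ := hch.exists_maxChain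
        refine h C hC (vres _ v) fun p => Submodule.mem_inf.mpr ⟨hvres _ p, ?_⟩
        rw [mem_chainSubspace]
        intro x y hxy
        rw [vres_apply]
        split_ifs with hq
        · exact absurd ⟨hsub hq.1, hsub hq.2⟩ hxy
        · rfl
      | succ n ihn =>
        intro D hD
        by_cases hch : IsChain (· ≤ ·) ((↑D : Set α))
        · obtain ⟨C, hC, hsub⟩ := hch.exists_maxChain
          refine h C hC (vres _ v) fun p => Submodule.mem_inf.mpr ⟨hvres _ p, ?_⟩
          rw [mem_chainSubspace]
          intro x y hxy
          rw [vres_apply]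
          split_ifs with hq
          · exact absurd ⟨hsub hq.1, hsub hq.2⟩ hxy
          · rfl
        · rw [IsChain, Set.Pairwise] at hch
          push_neg at hch
          obtain ⟨a, ha, b, hb, hne, hab, hba⟩ := hch
          have ha' : a ∈ D := ha
          have hbmem : b ∈ D.erase a := Finset.mem_erase.mpr ⟨hne.symm, hb⟩
          set E := (D.erase a).erase b with hE
          have hD1 : insert b E = D.erase a := Finset.insert_erase hbmem
          have hD2 : insert a (D.erase a) = D := Finset.insert_erase ha'
          have hset : ((↑D : Set α)) = insert a (insert b (↑E : Set α)) := by
            rw [← hD2, ← hD1, Finset.coe_insert, Finset.coe_insert]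
          have c1 : (D.erase a).card = D.card - 1 := Finset.card_erase_of_mem ha'
          have c2 : E.card = (D.erase a).card - 1 := Finset.card_erase_of_mem hbmem
          have c3 : 0 < D.card := Finset.card_pos.mpr ⟨a, ha'⟩
          have c4 : 0 < (D.erase a).card := Finset.card_pos.mpr ⟨b, hbmem⟩
          have i1 : (insert a E).card ≤ E.card + 1 := Finset.card_insert_le _ _
          have i2 : (insert b E).card ≤ E.card + 1 := Finset.card_insert_le _ _
          have z1 : FreeAlgebra.lift F (vres (↑E) v) Phi = 0 := ihn E (by omega)
          have z2 : FreeAlgebra.lift F (vres (↑(insert a E)) v) Phi = 0 :=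
            ihn (insert a E) (by omega)
          have z3 : FreeAlgebra.lift F (vres (↑(insert b E)) v) Phi = 0 :=
            ihn (insert b E) (by omega)
          rw [Finset.coe_insert] at z2
          rw [Finset.coe_insert] at z3
          refine IncidenceAlgebra.ext fun zz ww _ => ?_
          have h4 := lift_four v hab hba (↑E : Set α) Phi zz ww
          rw [z1, z2, z3, IncidenceAlgebra.zero_apply] at h4
          rw [hset, IncidenceAlgebra.zero_apply]
          simpa using h4
    refine IncidenceAlgebra.ext fun z w _ => ?_
    rw [IncidenceAlgebra.zero_apply, ← lift_Icc v z w Phi z w le_rfl le_rfl, ← Finset.coe_Icc,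
      key (Finset.Icc z w).card (Finset.Icc z w) le_rfl, IncidenceAlgebra.zero_apply]

end Main

/-- for a locally finite bounded poset `P`, a field `F` of characteristic zero
and `θ : P → G` with `G_θ` finite, a polynomial `Φ` is a `G`-graded polynomial identity of the
elementary grading `A^θ` of `I(P,F)` if and only if, for every maximal chain `C ⊆ P`, it is a
`G`-graded polynomial identity of the subalgebra `I(C,F)` with the grading induced by the
restriction of `θ`; i.e. `T_G(A^θ) = ⋂_C T_G(A_C^{θ|_C})`. -/
theorem gradedPI_iff_forall_maxChain {F α G : Type*} [Field F] [CharZero F] [PartialOrder α]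
    [LocallyFiniteOrder α] [DecidableEq α] [Group G]
    (hbdd : ∃ n : ℕ, ∀ C : Set α, IsChain (· ≤ ·) C → C.Finite ∧ C.ncard ≤ n)
    (θ : α → G) (hθ : {g : G | ∃ x y : α, x ≤ y ∧ (θ x)⁻¹ * θ y = g}.Finite)
    (Phi : FreeAlgebra F (ℕ × G)) :
    IsGradedPI (elemSubspace F θ) Phi ↔
      ∀ C : Set α, IsMaxChain (· ≤ ·) C →
        IsGradedPI (fun g : G => elemSubspace F θ g ⊓ chainSubspace F C) Phi := by
  exact gradedPI_iff_forall_maxChain' θ Phi
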